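/- Let V be a finite-dimensional real inner product space, w₁,…,w_k ∈ V linearly independent with W = span(w_i), and v ∈ V. Then the i-th coefficient of the orthogonal projection pr_W(v) in the basis (w₁,…,w_k) equals ⟨w₁ ∧ ⋯ ∧ w_{i-1} ∧ v ∧ w_{i+1} ∧ ⋯ ∧ w_k, w₁ ∧ ⋯ ∧ w_k⟩ / ‖w₁ ∧ ⋯ ∧ w_k‖² (i.e., with w_i replaced by v in the i-th slot). -/

import Mathlib

open scoped RealInnerProductSpace
open Matrix

/-- The Gram determinant `det (⟪u i, u' j⟫)`, which computes the inner product of the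
wedge products `u 0 ∧ ⋯ ∧ u (m-1)` and `u' 0 ∧ ⋯ ∧ u' (m-1)` for the inner product
induced on the exterior power. -/
noncomputable def gramDet {V : Type*} [NormedAddCommGroup V] [InnerProductSpace ℝ V]
    {m : ℕ} (u u' : Fin m → V) : ℝ :=
  (Matrix.of fun i j => (⟪u i, u' j⟫ : ℝ)).det

theorem stmt_6 {V : Type*} [NormedAddCommGroup V] [InnerProductSpace ℝ V]
    [FiniteDimensional ℝ V] {k : ℕ} (w : Fin k → V) (hw : LinearIndependent ℝ w)
    (W : Submodule ℝ V) (hW : W = Submodule.span ℝ (Set.range w)) (v : V)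
    (c : Fin k → ℝ) (hc : (W.orthogonalProjection v : V) = ∑ j, c j • w j) (i : Fin k) :
    c i = gramDet (Function.update w i v) w / gramDet w w := by
  set G : Matrix (Fin k) (Fin k) ℝ := Matrix.of fun i j => (⟪w i, w j⟫ : ℝ) with hG
  -- det G ≠ 0
  have hdet : G.det ≠ 0 := by
    intro h
    obtain ⟨x, hx0, hx⟩ := (Matrix.exists_mulVec_eq_zero_iff).2 h
    have hzero : (∑ l, x l • w l) = 0 := by
      have hnorm : ⟪∑ l, x l • w l, ∑ l, x l • w l⟫ = 0 := by
        rw [sum_inner]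
        have key : ∀ l, ⟪x l • w l, ∑ j, x j • w j⟫ = x l * (G *ᵥ x) l := by
          intro l
          rw [real_inner_smul_left, inner_sum]
          congr 1
          simp [Matrix.mulVec, dotProduct, hG, real_inner_smul_right, mul_comm]
        simp [key, hx]
      exact inner_self_eq_zero.mp hnorm
    exact hx0 (funext fun l => linearIndependent_iff'.mp hw Finset.univ x
      (by simpa using hzero) l (Finset.mem_univ l))
  -- the numerator matrix is G with row i replaced by a linear combination of rows of G
  have hmem : ∀ j, w j ∈ W := fun j => hW ▸ Submodule.subset_span ⟨j, rfl⟩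
  have hvw : ∀ j, (⟪v, w j⟫ : ℝ) = ∑ l, c l * ⟪w l, w j⟫ := by
    intro j
    have h1 : ⟪v - (W.orthogonalProjection v : V), w j⟫ = 0 :=
      W.starProjection_inner_eq_zero v (w j) (hmem j)
    have h2 : (⟪v, w j⟫ : ℝ) = ⟪(W.orthogonalProjection v : V), w j⟫ := by
      rw [inner_sub_left] at h1; linarith
    rw [h2, hc, sum_inner]
    simp [real_inner_smul_left]
  have hM : (Matrix.of fun a j => (⟪Function.update w i v a, w j⟫ : ℝ))
      = G.updateRow i (∑ l, c l • G l) := by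
    ext a j
    by_cases ha : a = i
    · subst ha
      simp [Matrix.updateRow_self, hvw j, hG]
    · simp [Matrix.updateRow_ne ha, Function.update_of_ne ha, hG]
  have : gramDet (Function.update w i v) w = c i * G.det := by
    rw [gramDet, hM, Matrix.det_updateRow_sum, smul_eq_mul]
  rw [this]
  rw [show gramDet w w = G.det from rfl]
  field_simp
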